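/- Let w = u^k where cop(w) = max{k : ∃ u, w = u^k} is the largest k such that w is a k-th power of a word u. Then for any word w over an alphabet and any positive integer j, cop(w^j) = j · cop(w). -/
import Mathlib

namespace CopAux

variable {α : Type*}

lemma length_pow (a : FreeMonoid α) (n : ℕ) : (a ^ n).length = n * a.length := by
  induction n with
  | zero => simp [FreeMonoid.length_one]
  | succ n ih => rw [pow_succ, FreeMonoid.length_mul, ih]; ring

/-- Equal-length prefixes of the same word coincide. -/
lemma eq_of_mul_eq_mul_length {x y a b : FreeMonoid α} (h : x * a = y * b)
    (hl : x.length = y.length) : x = y := by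
  have h' : FreeMonoid.toList x ++ FreeMonoid.toList a
      = FreeMonoid.toList y ++ FreeMonoid.toList b := congrArg FreeMonoid.toList h
  exact FreeMonoid.toList.injective (List.append_inj_left h' hl)

/-- If `x * a = y * b` and `x` is no longer than `y`, then `x` is a prefix of `y`. -/
lemma prefix_of_mul_eq_mul {x y a b : FreeMonoid α} (h : x * a = y * b)
    (hl : x.length ≤ y.length) : ∃ c, y = x * c := by
  have h' : FreeMonoid.toList x ++ FreeMonoid.toList a
      = FreeMonoid.toList y ++ FreeMonoid.toList b := congrArg FreeMonoid.toList h
  have hx : FreeMonoid.toList x <+: FreeMonoid.toList y := by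
    have h1 : FreeMonoid.toList x <+: FreeMonoid.toList y ++ FreeMonoid.toList b :=
      ⟨FreeMonoid.toList a, h'⟩
    exact List.prefix_of_prefix_length_le h1 (List.prefix_append _ _) hl
  obtain ⟨c, hc⟩ := hx
  exact ⟨FreeMonoid.ofList c, FreeMonoid.toList.injective hc.symm⟩

/-- Commuting words are powers of a common word. -/
lemma comm_exists_root : ∀ n (x y : FreeMonoid α), x.length + y.length ≤ n →
    x * y = y * x → ∃ (t : FreeMonoid α) (k l : ℕ), x = t ^ k ∧ y = t ^ l := by
  intro n
  induction n with
  | zero =>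
    intro x y hlen _
    have hx : x = 1 := FreeMonoid.length_eq_zero.mp (by omega)
    have hy : y = 1 := FreeMonoid.length_eq_zero.mp (by omega)
    exact ⟨1, 0, 0, by simp [hx], by simp [hy]⟩
  | succ n ih =>
    intro x y hlen hc
    rcases eq_or_ne x 1 with hx | hx
    · exact ⟨y, 0, 1, by simp [hx], by simp⟩
    rcases eq_or_ne y 1 with hy | hy
    · exact ⟨x, 1, 0, by simp, by simp [hy]⟩
    have hxpos : 0 < x.length :=
      Nat.pos_of_ne_zero fun h => hx (FreeMonoid.length_eq_zero.mp h)
    have hypos : 0 < y.length :=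
      Nat.pos_of_ne_zero fun h => hy (FreeMonoid.length_eq_zero.mp h)
    rcases le_total x.length y.length with hle | hle
    · obtain ⟨c, hcy⟩ := prefix_of_mul_eq_mul hc hle
      have hcomm : x * c = c * x := by
        have : x * (x * c) = (x * c) * x := by rw [← hcy]; exact hc
        have := this
        rw [mul_assoc] at this
        exact mul_left_cancel this
      have hclen : x.length + c.length ≤ n := by
        have := congrArg FreeMonoid.length hcy
        rw [FreeMonoid.length_mul] at this
        omega
      obtain ⟨t, k, l, hxk, hcl⟩ := ih x c hclen hcomm
      exact ⟨t, k, k + l, hxk, by rw [hcy, hxk, hcl, ← pow_add]⟩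
    · obtain ⟨c, hcx⟩ := prefix_of_mul_eq_mul hc.symm hle
      have hcomm : y * c = c * y := by
        have : y * (y * c) = (y * c) * y := by rw [← hcx]; exact hc.symm
        rw [mul_assoc] at this
        exact mul_left_cancel this
      have hclen : y.length + c.length ≤ n := by
        have := congrArg FreeMonoid.length hcx
        rw [FreeMonoid.length_mul] at this
        omega
      obtain ⟨t, k, l, hyk, hcl⟩ := ih y c hclen hcomm
      exact ⟨t, k + l, k, by rw [hcx, hyk, hcl, ← pow_add], hyk⟩

/-- If two powers coincide (with positive exponents), the bases commute. -/
lemma comm_of_pow_eq_pow {x y : FreeMonoid α} {m n : ℕ} (hm : 0 < m) (hn : 0 < n)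
    (h : x ^ m = y ^ n) : x * y = y * x := by
  have key : (x * y) * (y ^ (n - 1) * x ^ (m - 1)) = (y * x) * (x ^ (m - 1) * y ^ (n - 1)) := by
    have hx : x * x ^ (m - 1) = x ^ m := by
      rw [← pow_succ', Nat.sub_add_cancel hm]
    have hy : y * y ^ (n - 1) = y ^ n := by
      rw [← pow_succ', Nat.sub_add_cancel hn]
    calc (x * y) * (y ^ (n - 1) * x ^ (m - 1))
        = x * (y * y ^ (n - 1)) * x ^ (m - 1) := by simp [mul_assoc]
      _ = x * x ^ m * x ^ (m - 1) := by rw [hy, ← h]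
      _ = x * x ^ (m - 1) * x ^ m := by
          rw [mul_assoc, mul_assoc, ← pow_add, ← pow_add, Nat.add_comm]
      _ = x ^ m * x ^ m := by rw [hx]
      _ = y ^ n * y ^ n := by rw [h]
      _ = y * y ^ (n - 1) * y ^ n := by rw [hy]
      _ = y * y ^ n * y ^ (n - 1) := by
          rw [mul_assoc, mul_assoc, ← pow_add, ← pow_add, Nat.add_comm]
      _ = y * (x * x ^ (m - 1)) * y ^ (n - 1) := by rw [hx, h]
      _ = (y * x) * (x ^ (m - 1) * y ^ (n - 1)) := by simp [mul_assoc]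
  exact eq_of_mul_eq_mul_length key (by rw [FreeMonoid.length_mul, FreeMonoid.length_mul,
    Nat.add_comm])

end CopAux

/-- The coperiod of a word: the largest `k` such that `w = u^k` for some word `u`. -/
noncomputable def cop {α : Type*} (w : FreeMonoid α) : ℕ :=
  sSup {k : ℕ | ∃ u : FreeMonoid α, w = u ^ k}

namespace CopAux

lemma mem_copSet_le {α : Type*} {w : FreeMonoid α} (hw : w ≠ 1) {k : ℕ}
    (hk : k ∈ {k : ℕ | ∃ u : FreeMonoid α, w = u ^ k}) : k ≤ w.length := by
  obtain ⟨u, hu⟩ := hk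
  have hu1 : u ≠ 1 := by
    rintro rfl
    exact hw (by simpa using hu)
  have hupos : 0 < u.length :=
    Nat.pos_of_ne_zero fun h => hu1 (FreeMonoid.length_eq_zero.mp h)
  have := congrArg FreeMonoid.length hu
  rw [length_pow] at this
  calc k ≤ k * u.length := Nat.le_mul_of_pos_right k hupos
    _ = w.length := this.symm

lemma copSet_bdd {α : Type*} {w : FreeMonoid α} (hw : w ≠ 1) :
    BddAbove {k : ℕ | ∃ u : FreeMonoid α, w = u ^ k} := by
  exact ⟨w.length, fun _ hk => mem_copSet_le hw hk⟩

lemma cop_mem {α : Type*} {w : FreeMonoid α} (hw : w ≠ 1) :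
    ∃ u : FreeMonoid α, w = u ^ cop w :=
 by
  have h : (1 : ℕ) ∈ {k : ℕ | ∃ u : FreeMonoid α, w = u ^ k} := ⟨w, (pow_one w).symm⟩
  exact Nat.sSup_mem ⟨1, h⟩ (copSet_bdd hw)

lemma le_cop {α : Type*} {w : FreeMonoid α} (hw : w ≠ 1) {k : ℕ}
    (hk : ∃ u : FreeMonoid α, w = u ^ k) : k ≤ cop w :=
  le_csSup (copSet_bdd hw) hk

lemma cop_pos {α : Type*} {w : FreeMonoid α} (hw : w ≠ 1) : 0 < cop w :=
  le_cop hw ⟨w, (pow_one w).symm⟩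

end CopAux

open CopAux in
/-- For every nonempty word `w` and positive integer `j`, `cop(w^j) = j · cop(w)`. -/
theorem cop_pow {α : Type*} (w : FreeMonoid α) (hw : w ≠ 1) (j : ℕ) (hj : 0 < j) :
    cop (w ^ j) = j * cop w := by
  have hwpos : 0 < w.length :=
    Nat.pos_of_ne_zero fun h => hw (FreeMonoid.length_eq_zero.mp h)
  have hwj : w ^ j ≠ 1 := by
    intro h
    have := congrArg FreeMonoid.length h
    rw [length_pow, FreeMonoid.length_one] at this
    rcases Nat.mul_eq_zero.mp this with h' | h' <;> omega
  set c := cop w with hc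
  have hcpos : 0 < c := cop_pos hw
  obtain ⟨z, hz⟩ := cop_mem hw
  have hz1 : z ≠ 1 := by
    rintro rfl
    exact hw (by simpa using hz)
  have hzpos : 0 < z.length :=
    Nat.pos_of_ne_zero fun h => hz1 (FreeMonoid.length_eq_zero.mp h)
  -- lower bound : j * c ≤ cop (w ^ j)
  have hge : j * c ≤ cop (w ^ j) :=
    le_cop hwj ⟨z, by rw [hz, ← pow_mul, Nat.mul_comm]⟩
  -- upper bound
  obtain ⟨v, hv⟩ := cop_mem hwj
  set m := cop (w ^ j) with hm
  have hmpos : 0 < m := lt_of_lt_of_le (by positivity) hge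
  have hvz : v ^ m = z ^ (j * c) := by rw [← hv, hz, ← pow_mul, Nat.mul_comm]
  have hcomm : v * z = z * v := comm_of_pow_eq_pow hmpos (by positivity) hvz
  obtain ⟨t, a, b, hva, hzb⟩ := comm_exists_root (v.length + z.length) v z le_rfl hcomm
  -- z = t^b with b ≤ 1, and b ≠ 0, so z = t
  have hbc : b * c ≤ c := le_cop hw ⟨t, by rw [hz, hzb, ← pow_mul]⟩
  have hb1 : b = 1 := by
    have hb0 : b ≠ 0 := by
      rintro rfl
      exact hz1 (by simpa using hzb)
    have : b ≤ 1 := Nat.le_of_mul_le_mul_right (by simpa using hbc) hcpos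
    omega
  have hzt : z = t := by rw [hzb, hb1, pow_one]
  subst hzt
  have hjc : 0 < j * c := Nat.mul_pos hj hcpos
  rw [hva, ← pow_mul] at hvz
  have hlen := congrArg FreeMonoid.length hvz
  rw [length_pow, length_pow] at hlen
  have h2 : a * m = j * c := Nat.eq_of_mul_eq_mul_right hzpos hlen
  have ha : 0 < a := by
    rcases Nat.eq_zero_or_pos a with rfl | h
    · simp at h2; omega
    · exact h
  have hle : m ≤ j * c := by
    calc m ≤ a * m := Nat.le_mul_of_pos_left m ha
      _ = j * c := h2
  omega
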